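/- For every formal context K = (G, M, I) and every subset N ⊆ M, Σ_{g ∈ G} |{c ∈ B(K_N) : g ∈ ext(c)}| = Σ_{c ∈ B(K)_N} |ext(c)|, where K_N = (G, M\N, I ∩ (G × (M\N))) and B(K)_N = {c ∈ B(K) : (int(c) \ N)' = ext(c)}. -/

import Mathlib

open Finset

/-- A formal context `(G, M, I)` with finite object set `G`, finite attribute
set `M`, and incidence relation `I ⊆ G × M`. -/
structure FormalContext (α β : Type*) [DecidableEq α] [DecidableEq β] where
  G : Finset α
  M : Finset β
  I : Finset (α × β)
  inc : I ⊆ G ×ˢ M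

namespace FormalContext

variable {α β : Type*} [DecidableEq α] [DecidableEq β]

/-- The derivation operator `A ↦ A' = {m ∈ M : ∀ g ∈ A, (g,m) ∈ I}`. -/
def up (K : FormalContext α β) (A : Finset α) : Finset β :=
  K.M.filter fun m => ∀ g ∈ A, (g, m) ∈ K.I

/-- The derivation operator `B ↦ B' = {g ∈ G : ∀ m ∈ B, (g,m) ∈ I}`. -/
def down (K : FormalContext α β) (B : Finset β) : Finset α :=
  K.G.filter fun g => ∀ m ∈ B, (g, m) ∈ K.I

/-- The set `B(K)` of formal concepts of `K`: pairs `(A, B)` with `A' = B` and `B' = A`. -/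
def concepts (K : FormalContext α β) : Finset (Finset α × Finset β) :=
  (K.G.powerset ×ˢ K.M.powerset).filter fun c => K.up c.1 = c.2 ∧ K.down c.2 = c.1

/-- The extent label function `ℓ_K(g) = |{c ∈ B(K) : g ∈ ext(c)}|`. -/
def label (K : FormalContext α β) (g : α) : ℕ :=
  (K.concepts.filter fun c => g ∈ c.1).card

/-- The subcontext `K_N = (G, M \ N, I ∩ (G × (M \ N)))`. -/
def removeAttrs (K : FormalContext α β) (N : Finset β) : FormalContext α β where
  G := K.G
  M := K.M \ N
  I := K.I.filter fun p => p.2 ∉ N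
  inc := by
    intro p hp
    rw [Finset.mem_filter] at hp
    have h := K.inc hp.1
    rw [Finset.mem_product] at h ⊢
    exact ⟨h.1, Finset.mem_sdiff.mpr ⟨h.2, hp.2⟩⟩

/-- `m` is relevant to the object `g` iff `ℓ_{K_{m}}(g) < ℓ_K(g)`. -/
def RelevantTo (K : FormalContext α β) (m : β) (g : α) : Prop :=
  (K.removeAttrs {m}).label g < K.label g

/-- `m` is relevant to the context `K` iff it is relevant to some object `g ∈ G`. -/
def Relevant (K : FormalContext α β) (m : β) : Prop :=
  ∃ g ∈ K.G, K.RelevantTo m g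

/-- `m` is irreducible iff there is no `X ⊆ M \ {m}` with `X' = m'`. -/
def Irreducible (K : FormalContext α β) (m : β) : Prop :=
  ¬ ∃ X ⊆ K.M \ {m}, K.down X = K.down {m}

/-- `B(K)_N = {c ∈ B(K) : (int(c) \ N)' = ext(c)}`. -/
def conceptsRes (K : FormalContext α β) (N : Finset β) : Finset (Finset α × Finset β) :=
  K.concepts.filter fun c => K.down (c.2 \ N) = c.1

/-- The relative relevance `r(m) = 1 - (Σ_{g∈G} ℓ_{K_{m}}(g)) / (Σ_{g∈G} ℓ_K(g))`
of a single attribute `m`. -/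
noncomputable def relRel (K : FormalContext α β) (m : β) : ℝ :=
  1 - (∑ g ∈ K.G, ((K.removeAttrs {m}).label g : ℝ)) / (∑ g ∈ K.G, (K.label g : ℝ))

/-- The relative relevance of an attribute set `N`,
`r(N) = 1 - (Σ_{c ∈ B(K)_N} |ext(c)|) / (Σ_{c ∈ B(K)} |ext(c)|)`. -/
noncomputable def relRelSet (K : FormalContext α β) (N : Finset β) : ℝ :=
  1 - (∑ c ∈ K.conceptsRes N, (c.1.card : ℝ)) / (∑ c ∈ K.concepts, (c.1.card : ℝ))

/-- The Shannon object information entropy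
`E_SE(K) = Σ_{g∈G} -(|g''|/|G|) log₂ (|g''|/|G|)`. -/
noncomputable def ESE (K : FormalContext α β) : ℝ :=
  ∑ g ∈ K.G, (-(((K.down (K.up {g})).card : ℝ) / (K.G.card : ℝ)) *
    Real.logb 2 (((K.down (K.up {g})).card : ℝ) / (K.G.card : ℝ)))

/-- The object information entropy `E_OE(K) = (1/|G|) Σ_{g∈G} (1 - |g''|/|G|)`. -/
noncomputable def EOE (K : FormalContext α β) : ℝ :=
  (1 / (K.G.card : ℝ)) * ∑ g ∈ K.G, (1 - ((K.down (K.up {g})).card : ℝ) / (K.G.card : ℝ))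

end FormalContext

/-- The ordinal scale `O_n = ([n], [n], ≤)`. -/
def ordinalScale (n : ℕ) : FormalContext ℕ ℕ where
  G := Finset.Icc 1 n
  M := Finset.Icc 1 n
  I := (Finset.Icc 1 n ×ˢ Finset.Icc 1 n).filter fun p => p.1 ≤ p.2
  inc := Finset.filter_subset _ _

/-- The nominal scale `N_n = ([n], [n], =)`. -/
def nominalScale (n : ℕ) : FormalContext ℕ ℕ where
  G := Finset.Icc 1 n
  M := Finset.Icc 1 n
  I := (Finset.Icc 1 n ×ˢ Finset.Icc 1 n).filter fun p => p.1 = p.2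
  inc := Finset.filter_subset _ _

/-- The contranominal scale `C_n = ([n], [n], ≠)`. -/
def contranominalScale (n : ℕ) : FormalContext ℕ ℕ where
  G := Finset.Icc 1 n
  M := Finset.Icc 1 n
  I := (Finset.Icc 1 n ×ˢ Finset.Icc 1 n).filter fun p => p.1 ≠ p.2
  inc := Finset.filter_subset _ _

section Aux

variable {α β : Type*} [DecidableEq α] [DecidableEq β]

lemma up_removeAttrs (K : FormalContext α β) (N : Finset β) (A : Finset α) :
    (K.removeAttrs N).up A = K.up A \ N := by
  ext m
  simp only [FormalContext.up, FormalContext.removeAttrs, Finset.mem_filter,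
    Finset.mem_sdiff]
  constructor
  · rintro ⟨⟨hM, hn⟩, h⟩
    exact ⟨⟨hM, fun g hg => (h g hg).1⟩, hn⟩
  · rintro ⟨⟨hM, h⟩, hn⟩
    exact ⟨⟨hM, hn⟩, fun g hg => ⟨h g hg, hn⟩⟩

lemma down_removeAttrs (K : FormalContext α β) (N : Finset β) (B : Finset β)
    (h : ∀ m ∈ B, m ∉ N) : (K.removeAttrs N).down B = K.down B := by
  ext g
  simp only [FormalContext.down, FormalContext.removeAttrs, Finset.mem_filter]
  constructor
  · rintro ⟨hg, hall⟩
    exact ⟨hg, fun m hm => (hall m hm).1⟩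
  · rintro ⟨hg, hall⟩
    exact ⟨hg, fun m hm => ⟨hall m hm, h m hm⟩⟩

lemma down_mono (K : FormalContext α β) {B B' : Finset β} (h : B ⊆ B') :
    K.down B' ⊆ K.down B := by
  intro g hg
  simp only [FormalContext.down, Finset.mem_filter] at hg ⊢
  exact ⟨hg.1, fun m hm => hg.2 m (h hm)⟩

lemma subset_down_up (K : FormalContext α β) {A : Finset α} (hA : A ⊆ K.G) :
    A ⊆ K.down (K.up A) := by
  intro g hg
  simp only [FormalContext.down, FormalContext.up, Finset.mem_filter]
  exact Finset.mem_filter.mpr ⟨hA hg, fun m hm => (Finset.mem_filter.mp hm).2 g hg⟩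

end Aux

/-- For every `N ⊆ M`,
`Σ_{g∈G} |{c ∈ B(K_N) : g ∈ ext(c)}| = Σ_{c ∈ B(K)_N} |ext(c)|`. -/
theorem sum_label_removeAttrs_eq_sum_extent_card {α β : Type*}
    [DecidableEq α] [DecidableEq β]
    (K : FormalContext α β) (N : Finset β) (hN : N ⊆ K.M) :
    ∑ g ∈ K.G, (K.removeAttrs N).label g = ∑ c ∈ K.conceptsRes N, c.1.card := by
  classical
  have h1 : ∑ g ∈ K.G, (K.removeAttrs N).label g
      = ∑ c ∈ (K.removeAttrs N).concepts, c.1.card := by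
    unfold FormalContext.label
    simp only [Finset.card_filter]
    rw [Finset.sum_comm]
    refine Finset.sum_congr rfl fun c hc => ?_
    have hsub : c.1 ⊆ K.G := by
      have := (Finset.mem_filter.mp hc).1
      rw [Finset.mem_product] at this
      have := Finset.mem_powerset.mp this.1
      simpa [FormalContext.removeAttrs] using this
    rw [← Finset.card_filter]
    congr 1
    rw [Finset.filter_mem_eq_inter, Finset.inter_eq_right.mpr hsub]
  rw [h1]
  refine Finset.sum_nbij' (i := fun c => (c.1, K.up c.1))
    (j := fun c => (c.1, c.2 \ N)) ?_ ?_ ?_ ?_ ?_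
  · intro c hc
    simp only [FormalContext.concepts, Finset.mem_filter, Finset.mem_product,
      Finset.mem_powerset] at hc
    obtain ⟨⟨hA, hB⟩, hup, hdown⟩ := hc
    have hA' : c.1 ⊆ K.G := by simpa [FormalContext.removeAttrs] using hA
    have hupA : K.up c.1 \ N = c.2 := by rw [← up_removeAttrs]; exact hup
    have hBN : ∀ m ∈ c.2, m ∉ N := by
      intro m hm
      have := hB hm
      simp only [FormalContext.removeAttrs, Finset.mem_sdiff] at this
      exact this.2
    have hdown' : K.down c.2 = c.1 := by
      rw [← down_removeAttrs K N c.2 hBN]; exact hdown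
    have key : K.down (K.up c.1) = c.1 := by
      apply Finset.Subset.antisymm
      · calc K.down (K.up c.1) ⊆ K.down (K.up c.1 \ N) :=
              down_mono K (Finset.sdiff_subset)
          _ = c.1 := by rw [hupA, hdown']
      · exact subset_down_up K hA'
    simp only [FormalContext.conceptsRes, FormalContext.concepts,
      Finset.mem_filter, Finset.mem_product, Finset.mem_powerset]
    refine ⟨⟨⟨hA', Finset.filter_subset _ _⟩, trivial, key⟩, ?_⟩
    rw [hupA, hdown']
  · intro c hc
    simp only [FormalContext.conceptsRes, FormalContext.concepts,
      Finset.mem_filter, Finset.mem_product, Finset.mem_powerset] at hc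
    obtain ⟨⟨⟨hA, hB⟩, hup, hdown⟩, hres⟩ := hc
    simp only [FormalContext.concepts, Finset.mem_filter, Finset.mem_product,
      Finset.mem_powerset]
    have hBN : ∀ m ∈ c.2 \ N, m ∉ N := fun m hm => (Finset.mem_sdiff.mp hm).2
    refine ⟨⟨?_, ?_⟩, ?_, ?_⟩
    · simpa [FormalContext.removeAttrs] using hA
    · simp only [FormalContext.removeAttrs]
      exact fun m hm => Finset.mem_sdiff.mpr
        ⟨hB (Finset.mem_sdiff.mp hm).1, (Finset.mem_sdiff.mp hm).2⟩
    · rw [up_removeAttrs, hup]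
    · rw [down_removeAttrs K N _ hBN, hres]
  · intro c hc
    simp only [FormalContext.concepts, Finset.mem_filter] at hc
    obtain ⟨_, hup, _⟩ := hc
    have : K.up c.1 \ N = c.2 := by rw [← up_removeAttrs]; exact hup
    exact Prod.ext rfl this
  · intro c hc
    simp only [FormalContext.conceptsRes, FormalContext.concepts,
      Finset.mem_filter] at hc
    obtain ⟨⟨_, hup, _⟩, _⟩ := hc
    exact Prod.ext rfl hup
  · intro c _
    rfl
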